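/- On the Drury–Arveson space H²_d, the self-commutator [Z_i, Z_j*] = Z_i Z_j* − Z_j* Z_i restricted to the space H_n of homogeneous polynomials of degree n has operator norm at most 2/(n+1). -/

import Mathlib

open MvPolynomial Finset

noncomputable section

/-- The ℓ¹ norm of a polynomial: the sum of absolute values of its coefficients. -/
def l1 {d : ℕ} (p : MvPolynomial (Fin d) ℂ) : ℝ :=
  ∑ α ∈ p.support, ‖p.coeff α‖

/-- total degree |α| of a multi-index -/
def mdeg {d : ℕ} (α : Fin d →₀ ℕ) : ℕ := α.sum fun _ n => n

/-- Drury–Arveson weight  α!/|α|! -/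
def daW {d : ℕ} (α : Fin d →₀ ℕ) : ℝ :=
  (∏ i, Nat.factorial (α i)) / Nat.factorial (mdeg α)

/-- Drury–Arveson inner product on polynomials -/
def daInner {d : ℕ} (p q : MvPolynomial (Fin d) ℂ) : ℂ :=
  ∑ α ∈ p.support ∪ q.support, (starRingEnd ℂ) (p.coeff α) * q.coeff α * (daW α : ℂ)

/-- Drury–Arveson squared norm -/
def daNormSq {d : ℕ} (p : MvPolynomial (Fin d) ℂ) : ℝ :=
  ∑ α ∈ p.support, ‖p.coeff α‖ ^ 2 * daW α

/-- vector valued versions -/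
def vInner {d r : ℕ} (p q : Fin r → MvPolynomial (Fin d) ℂ) : ℂ := ∑ t, daInner (p t) (q t)

def vNormSq {d r : ℕ} (p : Fin r → MvPolynomial (Fin d) ℂ) : ℝ := ∑ t, daNormSq (p t)

def vNorm {d r : ℕ} (p : Fin r → MvPolynomial (Fin d) ℂ) : ℝ := Real.sqrt (vNormSq p)

def vHomog {d r : ℕ} (p : Fin r → MvPolynomial (Fin d) ℂ) (n : ℕ) : Prop :=
  ∀ t, (p t).IsHomogeneous n


namespace S12

variable {d : ℕ}

def gam (i j : Fin d) (α : Fin d →₀ ℕ) : Fin d →₀ ℕ :=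
  α + Finsupp.single i 1 - Finsupp.single j 1

def mu (n : ℕ) (i j : Fin d) (α : Fin d →₀ ℕ) : ℂ :=
  (n : ℂ)⁻¹ * (α j : ℂ) - ((n : ℂ) + 1)⁻¹ * ((α j + if i = j then 1 else 0 : ℕ) : ℂ)

def muR (n : ℕ) (i j : Fin d) (α : Fin d →₀ ℕ) : ℝ :=
  (n : ℝ)⁻¹ * (α j : ℝ) - ((n : ℝ) + 1)⁻¹ * ((α j + if i = j then 1 else 0 : ℕ) : ℝ)

lemma abs_mu (n : ℕ) (i j : Fin d) (α : Fin d →₀ ℕ) :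
    ‖mu n i j α‖ = |muR n i j α| := by
  rw [show mu n i j α = ((muR n i j α : ℝ) : ℂ) by simp only [mu, muR]; split_ifs <;> push_cast <;> ring,
    Complex.norm_real, Real.norm_eq_abs]

lemma daW_nonneg (α : Fin d →₀ ℕ) : 0 ≤ daW α := by
  unfold daW; positivity

lemma mdeg_eq_sum (α : Fin d →₀ ℕ) : mdeg α = ∑ k, α k :=
  Finsupp.sum_fintype _ _ fun _ => rfl

lemma coord_le (α : Fin d →₀ ℕ) (k : Fin d) : α k ≤ mdeg α := by
  rw [mdeg_eq_sum]
  exact Finset.single_le_sum (fun _ _ => Nat.zero_le _) (Finset.mem_univ k)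

lemma coord2_le (α : Fin d →₀ ℕ) {k l : Fin d} (hkl : k ≠ l) : α k + α l ≤ mdeg α := by
  classical
  rw [mdeg_eq_sum]
  calc α k + α l = ∑ m ∈ ({k, l} : Finset (Fin d)), α m := by rw [Finset.sum_pair hkl]
  _ ≤ ∑ m, α m := Finset.sum_le_sum_of_subset (Finset.subset_univ _)

lemma gam_apply (i j : Fin d) (α : Fin d →₀ ℕ) (k : Fin d) :
    gam i j α k = α k + (if i = k then 1 else 0) - (if j = k then 1 else 0) := by
  simp [gam, Finsupp.single_apply]

lemma gam_inj (i j : Fin d) {α β : Fin d →₀ ℕ} (hα : i = j ∨ α j ≠ 0) (hβ : i = j ∨ β j ≠ 0)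
    (hab : gam i j α = gam i j β) : α = β := by
  rcases eq_or_ne i j with rfl | hij
  · simpa [gam, add_tsub_cancel_right] using hab
  · replace hα := hα.resolve_left hij
    replace hβ := hβ.resolve_left hij
    have key : ∀ γ : Fin d →₀ ℕ, γ j ≠ 0 →
        gam i j γ + Finsupp.single j 1 - Finsupp.single i 1 = γ := by
      intro γ hγ
      ext k
      simp only [gam, Finsupp.tsub_apply, Finsupp.add_apply, Finsupp.single_apply]
      by_cases h1 : i = k <;> by_cases h2 : j = k <;> simp_all <;> omega
    rw [← key α hα, ← key β hβ, hab]

lemma sub_single_add (i j : Fin d) (α : Fin d →₀ ℕ) (hj : α j ≠ 0) :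
    Finsupp.single i 1 + (α - Finsupp.single j 1) = gam i j α := by
  ext k
  simp only [gam, Finsupp.tsub_apply, Finsupp.add_apply, Finsupp.single_apply]
  by_cases h1 : i = k <;> by_cases h2 : j = k <;> simp_all <;> omega

lemma single_add_apply (i j : Fin d) (α : Fin d →₀ ℕ) :
    ((Finsupp.single i 1 + α : Fin d →₀ ℕ) j) = α j + (if i = j then 1 else 0) := by
  rw [Finsupp.add_apply, Finsupp.single_apply]; omega

lemma single_term (n : ℕ) (i j : Fin d) (α : Fin d →₀ ℕ) (r : ℂ) :
    X i * ((n:ℂ)⁻¹ • pderiv j (monomial α r)) - ((n:ℂ)+1)⁻¹ • pderiv j (X i * monomial α r)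
      = monomial (gam i j α) (mu n i j α * r) := by
  rw [pderiv_monomial, smul_monomial, X, monomial_mul, one_mul, monomial_mul, one_mul,
    pderiv_monomial, smul_monomial, single_add_apply]
  have hexp2 : Finsupp.single i 1 + α - Finsupp.single j 1 = gam i j α := by
    rw [gam, add_comm α]
  by_cases hj : α j = 0
  · rw [hj, Nat.cast_zero, mul_zero, smul_zero, map_zero, zero_sub, hexp2, ← map_neg]
    congr 1
    simp only [mu, hj, smul_eq_mul]
    split_ifs <;> push_cast <;> ring
  · rw [sub_single_add i j α hj, hexp2, ← map_sub]
    congr 1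
    simp only [mu, smul_eq_mul]
    split_ifs <;> push_cast <;> ring

lemma comm_eq (n : ℕ) (i j : Fin d) (h : MvPolynomial (Fin d) ℂ) :
    X i * ((n:ℂ)⁻¹ • pderiv j h) - ((n:ℂ)+1)⁻¹ • pderiv j (X i * h)
      = ∑ α ∈ h.support, monomial (gam i j α) (mu n i j α * h.coeff α) := by
  conv_lhs => rw [h.as_sum]
  simp only [map_sum, Finset.mul_sum, Finset.smul_sum]
  rw [← Finset.sum_sub_distrib]
  exact Finset.sum_congr rfl fun α _ => single_term n i j α (h.coeff α)

section split
variable {M : Type*} [CommMonoid M]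
lemma prod_split (i j : Fin d) (hij : i ≠ j) (g : Fin d → M) :
    ∏ k, g k = g i * g j * ∏ k ∈ (univ.erase i).erase j, g k := by
  have hj : j ∈ univ.erase i := by simp [Ne.symm hij]
  rw [← Finset.mul_prod_erase _ g (Finset.mem_univ i), ← Finset.mul_prod_erase _ g hj, mul_assoc]
end split

lemma sum_split (i j : Fin d) (hij : i ≠ j) (g : Fin d → ℕ) :
    ∑ k, g k = g i + g j + ∑ k ∈ (univ.erase i).erase j, g k := by
  have hj : j ∈ univ.erase i := by simp [Ne.symm hij]
  rw [← Finset.add_sum_erase _ g (Finset.mem_univ i), ← Finset.add_sum_erase _ g hj, add_assoc]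

lemma gam_erase (i j : Fin d) (α : Fin d →₀ ℕ) {k : Fin d} (h1 : k ≠ i) (h2 : k ≠ j) :
    gam i j α k = α k := by
  rw [gam_apply, if_neg (Ne.symm h1), if_neg (Ne.symm h2)]
  omega

lemma mdeg_gam (i j : Fin d) (hij : i ≠ j) (α : Fin d →₀ ℕ) (hα : α j ≠ 0) :
    mdeg (gam i j α) = mdeg α := by
  rw [mdeg_eq_sum, mdeg_eq_sum, sum_split i j hij (fun k => gam i j α k),
    sum_split i j hij (fun k => α k)]
  have e1 : gam i j α i = α i + 1 := by rw [gam_apply, if_pos rfl, if_neg (Ne.symm hij)]; omega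
  have e2 : gam i j α j = α j - 1 := by rw [gam_apply, if_neg hij, if_pos rfl]; omega
  have e3 : ∑ k ∈ (univ.erase i).erase j, gam i j α k = ∑ k ∈ (univ.erase i).erase j, α k := by
    refine Finset.sum_congr rfl fun k hk => ?_
    simp only [Finset.mem_erase] at hk
    exact gam_erase i j α hk.2.1 hk.1
  simp only [e1, e2, e3]
  omega

lemma prod_gam (i j : Fin d) (hij : i ≠ j) (α : Fin d →₀ ℕ) (hα : α j ≠ 0) :
    α j * ∏ k, (gam i j α k).factorial = (α i + 1) * ∏ k, (α k).factorial := by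
  rw [prod_split i j hij (fun k => (gam i j α k).factorial),
    prod_split i j hij (fun k => (α k).factorial)]
  have e1 : gam i j α i = α i + 1 := by rw [gam_apply, if_pos rfl, if_neg (Ne.symm hij)]; omega
  have e2 : gam i j α j = α j - 1 := by rw [gam_apply, if_neg hij, if_pos rfl]; omega
  have e3 : ∏ k ∈ (univ.erase i).erase j, (gam i j α k).factorial
      = ∏ k ∈ (univ.erase i).erase j, (α k).factorial := by
    refine Finset.prod_congr rfl fun k hk => ?_
    simp only [Finset.mem_erase] at hk
    rw [gam_erase i j α hk.2.1 hk.1]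
  have e4 : α j * (α j - 1).factorial = (α j).factorial :=
    Nat.mul_factorial_pred hα
  rw [e1, e2, e3, Nat.factorial_succ, ← e4]
  ring

lemma daW_gam (i j : Fin d) (hij : i ≠ j) (α : Fin d →₀ ℕ) (hα : α j ≠ 0) :
    (α j : ℝ) * daW (gam i j α) = ((α i : ℝ) + 1) * daW α := by
  rw [daW, daW, mdeg_gam i j hij α hα, mul_div_assoc', mul_div_assoc']
  congr 1
  have := congrArg (Nat.cast : ℕ → ℝ) (prod_gam i j hij α hα)
  push_cast at this ⊢
  convert this using 2


lemma key (n : ℕ) (i j : Fin d) (α : Fin d →₀ ℕ) (hd : mdeg α = n)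
    (hij : i = j ∨ α j ≠ 0) :
    ‖mu n i j α‖ ^ 2 * daW (gam i j α) ≤ (2 / ((n:ℝ)+1))^2 * daW α := by
  rw [abs_mu, sq_abs]
  rcases eq_or_ne i j with rfl | hne
  · have hg : gam i i α = α := add_tsub_cancel_right _ _
    rw [hg]
    have hb : α i ≤ n := hd ▸ coord_le α i
    have hmuR : muR n i i α = (n:ℝ)⁻¹ * (α i) - ((n:ℝ)+1)⁻¹ * ((α i : ℝ) + 1) := by
      simp [muR]
    refine mul_le_mul_of_nonneg_right ?_ (daW_nonneg α)
    rcases Nat.eq_zero_or_pos n with rfl | hn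
    · have h0 : α i = 0 := Nat.le_zero.mp hb
      rw [hmuR, h0]; norm_num
    · have hn1 : (1:ℝ) ≤ n := by exact_mod_cast hn
      have hbR : (α i : ℝ) ≤ n := by exact_mod_cast hb
      have h0 : (0:ℝ) ≤ α i := Nat.cast_nonneg _
      have hrw : muR n i i α = ((α i : ℝ) - n) / ((n:ℝ) * ((n:ℝ)+1)) := by
        rw [hmuR]; field_simp; try ring
      rw [hrw, div_pow, div_pow, div_le_div_iff₀ (by positivity) (by positivity)]
      have hsq : ((α i:ℝ) - n)^2 ≤ (n:ℝ)^2 := by nlinarith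
      nlinarith [mul_le_mul_of_nonneg_right hsq (sq_nonneg ((n:ℝ)+1)),
        mul_nonneg (mul_nonneg (le_trans zero_le_one hn1) (le_trans zero_le_one hn1))
          (sq_nonneg ((n:ℝ)+1))]
  · have hb : α j ≠ 0 := hij.resolve_left hne
    have hbpos : 1 ≤ α j := Nat.one_le_iff_ne_zero.mpr hb
    have hsum : α i + α j ≤ n := hd ▸ coord2_le α hne
    have hn : 1 ≤ n := le_trans hbpos (hd ▸ coord_le α j)
    have h2 : α j * (α i + 1) ≤ n * n :=
      Nat.mul_le_mul (by omega) (by omega)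
    have hmuR : muR n i j α = (α j : ℝ) * ((n:ℝ)⁻¹ - ((n:ℝ)+1)⁻¹) := by
      simp [muR, hne]; try ring
    have hW := daW_gam i j hne α hb
    have hWγ : 0 ≤ daW (gam i j α) := daW_nonneg _
    have hWα : 0 ≤ daW α := daW_nonneg _
    have hnR : (1:ℝ) ≤ n := by exact_mod_cast hn
    have hmu2 : muR n i j α ^ 2 = (α j:ℝ)^2 / ((n:ℝ)*((n:ℝ)+1))^2 := by
      rw [hmuR]; field_simp; try ring
    have hcalc : muR n i j α ^2 * daW (gam i j α)
        = ((α j:ℝ) * ((α i:ℝ) + 1)) * daW α / ((n:ℝ)*((n:ℝ)+1))^2 := by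
      rw [hmu2, div_mul_eq_mul_div, sq, mul_assoc, hW]; ring
    rw [hcalc, div_le_iff₀ (by positivity)]
    have h2R : (α j:ℝ) * ((α i:ℝ)+1) ≤ (n:ℝ)*n := by exact_mod_cast h2
    have hrw2 : (2/((n:ℝ)+1))^2 * daW α * ((n:ℝ)*((n:ℝ)+1))^2 = 4 * ((n:ℝ)*(n:ℝ)) * daW α := by
      field_simp; ring
    rw [hrw2]
    nlinarith [mul_le_mul_of_nonneg_right h2R hWα]

end S12

open S12 in
/-- the self-commutator `[Z_i, Z_j^*]` of the `d`-shift restricted to the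
space of homogeneous polynomials of degree `n` has norm at most `2/(n+1)`.  (On `H_n`,
`Z_j^*` acts as `n⁻¹ ∂/∂z_j`, which also vanishes on constants when `n = 0`.) -/
theorem stmt12 (d n : ℕ) (i j : Fin d) (h : MvPolynomial (Fin d) ℂ)
    (hh : h.IsHomogeneous n) :
    daNormSq (X i * (((n : ℂ))⁻¹ • pderiv j h) - (((n : ℂ) + 1))⁻¹ • pderiv j (X i * h))
      ≤ (2 / ((n : ℝ) + 1)) ^ 2 * daNormSq h := by
  classical
  set T := h.support.filter (fun α => i = j ∨ α j ≠ 0) with hTdef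
  have hsub : T ⊆ h.support := Finset.filter_subset _ _
  have hmem : ∀ α ∈ T, i = j ∨ α j ≠ 0 := fun α hα => (Finset.mem_filter.mp hα).2
  have hC : X i * (((n : ℂ))⁻¹ • pderiv j h) - (((n : ℂ) + 1))⁻¹ • pderiv j (X i * h)
      = ∑ α ∈ T, monomial (gam i j α) (mu n i j α * h.coeff α) := by
    rw [comm_eq]
    refine (Finset.sum_subset hsub fun α hα hαT => ?_).symm
    have hcond : ¬(i = j ∨ α j ≠ 0) := fun hc => hαT (Finset.mem_filter.mpr ⟨hα, hc⟩)
    push_neg at hcond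
    have hmu : mu n i j α = 0 := by simp [mu, hcond.1, hcond.2]
    rw [hmu, zero_mul, map_zero]
  rw [hC]
  set q := ∑ α ∈ T, monomial (gam i j α) (mu n i j α * h.coeff α) with hq
  have hcoeff : ∀ α ∈ T, q.coeff (gam i j α) = mu n i j α * h.coeff α := by
    intro α hα
    rw [hq, MvPolynomial.coeff_sum]
    simp only [MvPolynomial.coeff_monomial]
    rw [Finset.sum_eq_single α (fun β hβ hβα => if_neg fun hgam =>
      hβα (gam_inj i j (hmem β hβ) (hmem α hα) hgam)) (fun hα' => absurd hα hα'), if_pos rfl]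
  have hsupp : q.support ⊆ T.image (gam i j) := by
    intro β hβ
    by_contra hβ'
    refine MvPolynomial.mem_support_iff.mp hβ ?_
    rw [hq, MvPolynomial.coeff_sum]
    refine Finset.sum_eq_zero fun α hα => ?_
    rw [MvPolynomial.coeff_monomial, if_neg fun e => hβ' (Finset.mem_image.mpr ⟨α, hα, e⟩)]
  have hdeg : ∀ α ∈ T, mdeg α = n := by
    intro α hα
    have h0 : α.degree = n := by
      rw [Finsupp.degree_eq_weight_one]
      exact hh (MvPolynomial.mem_support_iff.mp (hsub hα))
    exact h0
  have h1 : daNormSq q = ∑ α ∈ T, ‖q.coeff (gam i j α)‖ ^ 2 * daW (gam i j α) := by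
    rw [daNormSq,
      Finset.sum_subset hsupp (fun β _ hβ => by rw [MvPolynomial.notMem_support_iff.mp hβ]; simp),
      Finset.sum_image (fun x hx y hy e => gam_inj i j (hmem x hx) (hmem y hy) e)]
  rw [h1]
  have h2 : ∀ α ∈ T, ‖q.coeff (gam i j α)‖ ^ 2 * daW (gam i j α)
      ≤ (2 / ((n : ℝ) + 1)) ^ 2 * (‖h.coeff α‖ ^ 2 * daW α) := by
    intro α hα
    rw [hcoeff α hα, norm_mul, mul_pow]
    have hk := key n i j α (hdeg α hα) (hmem α hα)
    calc ‖mu n i j α‖^2 * ‖h.coeff α‖^2 * daW (gam i j α)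
        = ‖h.coeff α‖^2 * (‖mu n i j α‖^2 * daW (gam i j α)) := by ring
    _ ≤ ‖h.coeff α‖^2 * ((2 / ((n : ℝ) + 1)) ^ 2 * daW α) :=
        mul_le_mul_of_nonneg_left hk (by positivity)
    _ = (2 / ((n : ℝ) + 1)) ^ 2 * (‖h.coeff α‖^2 * daW α) := by ring
  calc ∑ α ∈ T, ‖q.coeff (gam i j α)‖ ^ 2 * daW (gam i j α)
      ≤ ∑ α ∈ T, (2 / ((n : ℝ) + 1)) ^ 2 * (‖h.coeff α‖ ^ 2 * daW α) :=
        Finset.sum_le_sum h2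
  _ = (2 / ((n : ℝ) + 1)) ^ 2 * ∑ α ∈ T, ‖h.coeff α‖ ^ 2 * daW α := by
        rw [Finset.mul_sum]
  _ ≤ (2 / ((n : ℝ) + 1)) ^ 2 * daNormSq h := by
        refine mul_le_mul_of_nonneg_left ?_ (by positivity)
        exact Finset.sum_le_sum_of_subset_of_nonneg hsub fun β _ _ =>
          mul_nonneg (by positivity) (daW_nonneg β)

end
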